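/- Let A(1,1:l),…,A(m,1:l) be i.i.d. random vectors in 𝒜^l with law p_{A^l}, and let Λ_1,…,Λ_m be permutations of {1,…,l} chosen uniformly and independently (also independent of the A's). Define B(t,i) = A(t,Λ_t(i)). Then for every fixed i in {1,…,l}, the vector (B(1,i),…,B(m,i)) is distributed according to the product measure ∏_{t=1}^m (1/l)∑_{j=1}^l p_{A_j}, i.e., the l interleaved columns are identically distributed with i.i.d. entries of law (1/l)∑_{j=1}^l p_{A_j}. -/

import Mathlib

open Finset

lemma sum_perm_apply {n : ℕ} (i : Fin (n + 1)) (f : Fin (n + 1) → ℝ) :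
    ∑ σ : Equiv.Perm (Fin (n + 1)), f (σ i) =
      (Nat.factorial n : ℝ) * ∑ j, f j := by
  have h0 : ∑ σ : Equiv.Perm (Fin (n + 1)), f (σ 0) =
      ∑ σ : Equiv.Perm (Fin (n + 1)), f (σ i) := by
    refine Fintype.sum_equiv (Equiv.mulRight (Equiv.swap 0 i)) _ _ ?_
    intro σ
    simp [Equiv.Perm.mul_apply]
  rw [← h0, ← Equiv.sum_comp (Equiv.Perm.decomposeFin.symm) (fun σ => f (σ 0)),
    Fintype.sum_prod_type]
  simp [Finset.sum_const, Fintype.card_perm]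
  rw [← Finset.mul_sum]

/-- Interleaving: rows `A(1,·),…,A(m,·)` i.i.d. with law `p` on `α^l`, and `Λ₁,…,Λ_m`
uniform independent permutations of `{1,…,l}` (independent of the rows).  With
`B(t,i) = A(t, Λ_t(i))`, for every fixed column `i` the vector `(B(1,i),…,B(m,i))` is
distributed as the product `∏_t q` where `q = (1/l)∑_j p_{A_j}`. -/
theorem stmt_2 {α : Type*} [Fintype α] [DecidableEq α] (l m : ℕ) (hl : 0 < l)
    (p : (Fin l → α) → ℝ) (hp0 : ∀ v, 0 ≤ p v) (hp1 : ∑ v, p v = 1)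
    (q : α → ℝ)
    (hq : ∀ a : α,
      q a = (1 / (l : ℝ)) * ∑ j : Fin l, ∑ v : Fin l → α, if v j = a then p v else 0)
    (i : Fin l) (b : Fin m → α) :
    ∑ A : Fin m → Fin l → α, ∑ Λ : Fin m → Equiv.Perm (Fin l),
        ((∏ t, p (A t)) * (1 / (Nat.factorial l : ℝ)) ^ m) *
          (if (fun t => A t (Λ t i)) = b then 1 else 0)
      = ∏ t, q (b t) := by
  obtain ⟨n, rfl⟩ : ∃ n, l = n + 1 := ⟨l - 1, (Nat.succ_pred_eq_of_pos hl).symm⟩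
  set c : ℝ := 1 / (Nat.factorial (n + 1) : ℝ) with hc
  -- per-column factor
  set F : Fin m → ((Fin (n + 1) → α) × Equiv.Perm (Fin (n + 1))) → ℝ :=
    fun t x => p x.1 * c * (if x.1 (x.2 i) = b t then 1 else 0) with hF
  have key : ∀ (A : Fin m → Fin (n + 1) → α) (Λ : Fin m → Equiv.Perm (Fin (n + 1))),
      ((∏ t, p (A t)) * c ^ m) * (if (fun t => A t (Λ t i)) = b then 1 else 0)
        = ∏ t, F t (A t, Λ t) := by
    intro A Λ
    have hite : (if (fun t => A t (Λ t i)) = b then (1:ℝ) else 0)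
        = ∏ t, (if A t (Λ t i) = b t then (1:ℝ) else 0) := by
      simp [Finset.prod_boole, funext_iff]
    rw [hite, hF]
    rw [Finset.prod_mul_distrib, Finset.prod_mul_distrib, Finset.prod_const,
      Finset.card_univ, Fintype.card_fin]
  have hfactor : ∀ t, ∑ x : (Fin (n + 1) → α) × Equiv.Perm (Fin (n + 1)), F t x = q (b t) := by
    intro t
    rw [Fintype.sum_prod_type, hq]
    have : ∀ a : Fin (n + 1) → α,
        ∑ σ : Equiv.Perm (Fin (n + 1)), F t (a, σ)
          = p a * (1 / ((n : ℝ) + 1)) * ∑ j, (if a j = b t then (1:ℝ) else 0) := by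
      intro a
      simp only [hF, ← Finset.mul_sum]
      rw [sum_perm_apply i (fun j => if a j = b t then (1:ℝ) else 0)]
      have hfac : (Nat.factorial (n + 1) : ℝ) = ((n : ℝ) + 1) * (Nat.factorial n : ℝ) := by
        rw [Nat.factorial_succ]; push_cast; ring
      have hne : (Nat.factorial n : ℝ) ≠ 0 := Nat.cast_ne_zero.mpr (Nat.factorial_ne_zero n)
      have hne2 : ((n : ℝ) + 1) ≠ 0 := by positivity
      rw [hc, hfac]
      field_simp
    rw [Finset.sum_congr rfl (fun a _ => this a)]
    rw [Finset.sum_comm]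
    push_cast
    rw [Finset.mul_sum]
    congr 1
    ext j
    rw [Finset.mul_sum, Finset.mul_sum]
    congr 1
    ext a
    simp only [mul_ite, mul_one, mul_zero, ite_mul, one_mul, zero_mul]
    ring_nf
  calc ∑ A : Fin m → Fin (n + 1) → α, ∑ Λ : Fin m → Equiv.Perm (Fin (n + 1)),
        ((∏ t, p (A t)) * c ^ m) * (if (fun t => A t (Λ t i)) = b then 1 else 0)
      = ∑ A : Fin m → Fin (n + 1) → α, ∑ Λ : Fin m → Equiv.Perm (Fin (n + 1)),
          ∏ t, F t (A t, Λ t) := by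
        exact Finset.sum_congr rfl fun A _ => Finset.sum_congr rfl fun Λ _ => key A Λ
    _ = ∑ x : Fin m → ((Fin (n + 1) → α) × Equiv.Perm (Fin (n + 1))), ∏ t, F t (x t) := by
        exact (Fintype.sum_prod_type (f := fun z : (Fin m → Fin (n + 1) → α) × (Fin m → Equiv.Perm (Fin (n + 1))) => ∏ t, F t (z.1 t, z.2 t))).symm.trans
          (Equiv.sum_comp (Equiv.arrowProdEquivProdArrow (Fin m) (fun _ => Fin (n + 1) → α) (fun _ => Equiv.Perm (Fin (n + 1)))).symm
            (fun x => ∏ t, F t (x t)))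
    _ = ∏ t, ∑ x, F t x := (Fintype.prod_sum _).symm
    _ = ∏ t, q (b t) := Finset.prod_congr rfl fun t _ => hfactor t
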